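/- Suppose |p_2^1 - p_2^2| * r < |p_1^1 - p_1^2| * w_d * d_{1,0}. Then p_1^1 != p_1^2; let m* in {1,2} be the content with p_1^{m*} > p_1^{m'}, where m' denotes the other content. Then for every x_2 in S with x_2^{m*} = 0, the strategy x_1 with x_1^{m*} = 1 and x_1^{m'} = 0 (completely caching UT 1's favorite content m*) maximizes U_1(., x_2) over the set { x_1 in S : x_1^m + x_2^m <= 1 for m = 1, 2 }; in particular this holds when x_2 completely caches the other content m'. -/

import Mathlib

open scoped BigOperators

/-- The strategy simplex `S = { x ∈ [0,1]^2 : x^1 + x^2 ≤ 1 }` of a UT in the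
two-UT two-content model (contents have size 1, cache size 1). -/
def Ssimplex : Set (Fin 2 → ℝ) :=
  {x | (∀ m, 0 ≤ x m ∧ x m ≤ 1) ∧ x 0 + x 1 ≤ 1}

/-- UT 1's utility in the two-UT two-content model. -/
def U1 (p1 p2 : Fin 2 → ℝ) (r wd d12 d10 : ℝ) (x1 x2 : Fin 2 → ℝ) : ℝ :=
  ∑ m, (p2 m * r * min (x1 m) (1 - x2 m)
    - wd * p1 m * max ((1 - x1 m) * d12) ((1 - x1 m - x2 m) * d10 + x2 m * d12))

set_option maxHeartbeats 1000000 in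
/-- If `|p_2^1 - p_2^2| r < |p_1^1 - p_1^2| w_d d_{1,0}` then UT 1's preferences differ
on the two contents, and for UT 1's favorite content `m*`, whenever UT 2 caches none of
`m*`, completely caching `m*` maximizes UT 1's utility over the first-case region
`{ x_1 ∈ S : x_1^m + x_2^m ≤ 1, m = 1,2 }`. -/
theorem statement1 (p1 p2 : Fin 2 → ℝ) (r wd d12 d10 : ℝ)
    (hp1 : ∀ m, 0 ≤ p1 m) (hp2 : ∀ m, 0 ≤ p2 m)
    (hp1sum : p1 0 + p1 1 = 1) (hp2sum : p2 0 + p2 1 = 1)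
    (hr : 0 ≤ r) (hwd : 0 ≤ wd) (hd12 : 0 ≤ d12) (hd : d12 ≤ d10)
    (hlt : |p2 0 - p2 1| * r < |p1 0 - p1 1| * wd * d10) :
    p1 0 ≠ p1 1 ∧
      ∀ mstar mprime : Fin 2, mstar ≠ mprime → p1 mprime < p1 mstar →
        ∀ x2 ∈ Ssimplex, x2 mstar = 0 →
          ∀ x1 ∈ Ssimplex, (∀ m, x1 m + x2 m ≤ 1) →
            U1 p1 p2 r wd d12 d10 x1 x2 ≤
              U1 p1 p2 r wd d12 d10 (fun m => if m = mstar then 1 else 0) x2 := by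
  have hd10 : 0 ≤ d10 := hd12.trans hd
  constructor
  · intro h
    rw [h] at hlt
    simp at hlt
    nlinarith [abs_nonneg (p2 0 - p2 1), mul_nonneg (abs_nonneg (p2 0 - p2 1)) hr]
  · intro mstar mprime hne hplt x2 hx2 hx2s x1 hx1 hsum
    obtain ⟨hx21, hx2sum⟩ := hx2
    obtain ⟨hx11, hx1sum⟩ := hx1
    have hq1 := (hx21 0).1; have hq2 := (hx21 0).2; have hq3 := (hx21 1).1; have hq4 := (hx21 1).2
    have hq5 := hsum 0; have hq6 := hsum 1
    fin_cases mstar <;> fin_cases mprime <;> simp_all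
    · -- mstar = 0, mprime = 1
      have h10 : 0 ≤ x1 0 ∧ x1 0 ≤ 1 := by simp_all
      have h11 : 0 ≤ x1 1 ∧ x1 1 ≤ 1 := by simp_all
      have h20 : 0 ≤ x2 0 ∧ x2 0 ≤ 1 := by simp_all
      have h21 : 0 ≤ x2 1 ∧ x2 1 ≤ 1 := by simp_all
      have hs1 : x1 1 + x2 1 ≤ 1 := by simp_all
      have hC : p2 1 * r + wd * p1 1 * d10 ≤ p2 0 * r + wd * p1 0 * d10 := by
        have ha : |p1 0 - p1 1| = p1 0 - p1 1 := abs_of_pos (by linarith)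
        rw [ha] at hlt
        nlinarith [neg_abs_le (p2 0 - p2 1)]
      simp only [U1, Fin.sum_univ_two, hx2s]
      norm_num
      have e1 : x1 0 ⊓ 1 = x1 0 := min_eq_left h10.2
      have e2 : (1 - x1 0) * d12 ⊔ (1 - x1 0) * d10 = (1 - x1 0) * d10 :=
        max_eq_right (by nlinarith [mul_nonneg (by linarith [h10.2] : (0:ℝ) ≤ 1 - x1 0) (by linarith : (0:ℝ) ≤ d10 - d12)])
      have e3 : x1 1 ⊓ (1 - x2 1) = x1 1 := min_eq_left (by linarith)
      have e4 : (1 - x1 1) * d12 ⊔ ((1 - x1 1 - x2 1) * d10 + x2 1 * d12) = (1 - x1 1 - x2 1) * d10 + x2 1 * d12 :=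
        max_eq_right (by nlinarith [mul_nonneg (by linarith : (0:ℝ) ≤ 1 - x1 1 - x2 1) (by linarith : (0:ℝ) ≤ d10 - d12)])
      have e5 : (0:ℝ) ⊓ (1 - x2 1) = 0 := min_eq_left (by linarith [h21.2])
      have e6 : d12 ⊔ ((1 - x2 1) * d10 + x2 1 * d12) = (1 - x2 1) * d10 + x2 1 * d12 :=
        max_eq_right (by nlinarith [mul_nonneg (by linarith [h21.2] : (0:ℝ) ≤ 1 - x2 1) (by linarith : (0:ℝ) ≤ d10 - d12)])
      rw [e1, e2, e3, e4, e5, e6]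
      have hCpos : 0 ≤ p2 0 * r + wd * p1 0 * d10 :=
        add_nonneg (mul_nonneg hp2.1 hr) (mul_nonneg (mul_nonneg hwd hp1.1) hd10)
      nlinarith [mul_nonneg (by linarith : (0:ℝ) ≤ 1 - x1 0 - x1 1) hCpos,
        mul_nonneg h11.1 (sub_nonneg.mpr hC)]
    · -- mstar = 1, mprime = 0
      have h10 : 0 ≤ x1 0 ∧ x1 0 ≤ 1 := by simp_all
      have h11 : 0 ≤ x1 1 ∧ x1 1 ≤ 1 := by simp_all
      have h20 : 0 ≤ x2 0 ∧ x2 0 ≤ 1 := by simp_all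
      have h21 : 0 ≤ x2 1 ∧ x2 1 ≤ 1 := by simp_all
      have hs0 : x1 0 + x2 0 ≤ 1 := by simp_all
      have hC : p2 0 * r + wd * p1 0 * d10 ≤ p2 1 * r + wd * p1 1 * d10 := by
        have ha : |p1 0 - p1 1| = -(p1 0 - p1 1) := abs_of_neg (by linarith)
        rw [ha] at hlt
        have h2 := mul_le_mul_of_nonneg_right (le_abs_self (p2 0 - p2 1)) hr
        nlinarith [h2]
      simp only [U1, Fin.sum_univ_two, hx2s]
      norm_num
      have e1 : x1 1 ⊓ 1 = x1 1 := min_eq_left h11.2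
      have e2 : (1 - x1 1) * d12 ⊔ (1 - x1 1) * d10 = (1 - x1 1) * d10 :=
        max_eq_right (by nlinarith [mul_nonneg (by linarith [h11.2] : (0:ℝ) ≤ 1 - x1 1) (by linarith : (0:ℝ) ≤ d10 - d12)])
      have e3 : x1 0 ⊓ (1 - x2 0) = x1 0 := min_eq_left (by linarith)
      have e4 : (1 - x1 0) * d12 ⊔ ((1 - x1 0 - x2 0) * d10 + x2 0 * d12) = (1 - x1 0 - x2 0) * d10 + x2 0 * d12 :=
        max_eq_right (by nlinarith [mul_nonneg (by linarith : (0:ℝ) ≤ 1 - x1 0 - x2 0) (by linarith : (0:ℝ) ≤ d10 - d12)])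
      have e5 : (0:ℝ) ⊓ (1 - x2 0) = 0 := min_eq_left (by linarith [h20.2])
      have e6 : d12 ⊔ ((1 - x2 0) * d10 + x2 0 * d12) = (1 - x2 0) * d10 + x2 0 * d12 :=
        max_eq_right (by nlinarith [mul_nonneg (by linarith [h20.2] : (0:ℝ) ≤ 1 - x2 0) (by linarith : (0:ℝ) ≤ d10 - d12)])
      rw [e1, e2, e3, e4, e5, e6]
      have hCpos : 0 ≤ p2 1 * r + wd * p1 1 * d10 :=
        add_nonneg (mul_nonneg hp2.2 hr) (mul_nonneg (mul_nonneg hwd hp1.2) hd10)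
      nlinarith [mul_nonneg (by linarith : (0:ℝ) ≤ 1 - x1 1 - x1 0) hCpos,
        mul_nonneg h10.1 (sub_nonneg.mpr hC)]
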